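/- Suppose λ₀ is a point of analyticity of M_B; suppose there is r > 0 such that the punctured disc {λ ∈ ℂ : 0 < |λ − λ₀| < r} is contained in ρ(A_B); suppose ρ(Ã_{B*}) has finitely many connected components; and suppose Ã_{B*} is the Hilbert-space adjoint of A_B, i.e. for v, w ∈ H one has v ∈ D(T̃) with Γ̃₁v = B*Γ̃₂v and T̃v = w if and only if ⟨A_B u, v⟩_H = ⟨u, w⟩_H for all u ∈ D(A_B). Then for every Φ in the closure of 𝒮 and every Φ̃ in the closure of 𝒮̃ there exists an analytic function g on the full disc {λ ∈ ℂ : |λ − λ₀| < r} such that g(λ) = ⟨(A_B − λI)^{−1}Φ, Φ̃⟩_H for all λ with 0 < |λ − λ₀| < r. -/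

import Mathlib

open scoped InnerProductSpace
set_option linter.unusedSectionVars false
set_option linter.unusedVariables false
set_option maxHeartbeats 1000000

variable {H 𝓗 𝓚 : Type*}
  [NormedAddCommGroup H] [InnerProductSpace ℂ H] [CompleteSpace H]
  [NormedAddCommGroup 𝓗] [InnerProductSpace ℂ 𝓗] [CompleteSpace 𝓗]
  [NormedAddCommGroup 𝓚] [InnerProductSpace ℂ 𝓚] [CompleteSpace 𝓚]

/-- `R` is the (bounded, everywhere defined) inverse of `A_B − λ`, where `A_B` is the
restriction of `T` to `{u ∈ D(T) : Γ₁ u = B (Γ₂ u)}`. -/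
def IsResolventAt (dom : Submodule ℂ H) (T : dom →ₗ[ℂ] H)
    (Γ₁ : dom →ₗ[ℂ] 𝓗) (Γ₂ : dom →ₗ[ℂ] 𝓚) (B : 𝓚 →L[ℂ] 𝓗)
    (lam : ℂ) (R : H →L[ℂ] H) : Prop :=
  (∀ h : H, ∃ hm : R h ∈ dom,
      Γ₁ ⟨R h, hm⟩ = B (Γ₂ ⟨R h, hm⟩) ∧ T ⟨R h, hm⟩ - lam • R h = h) ∧
  (∀ u : dom, Γ₁ u = B (Γ₂ u) → R (T u - lam • (u : H)) = (u : H))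

/-- The resolvent set `ρ(A_B)`. -/
def resolventSetB (dom : Submodule ℂ H) (T : dom →ₗ[ℂ] H)
    (Γ₁ : dom →ₗ[ℂ] 𝓗) (Γ₂ : dom →ₗ[ℂ] 𝓚) (B : 𝓚 →L[ℂ] 𝓗) : Set ℂ :=
  {lam | ∃ R : H →L[ℂ] H, IsResolventAt dom T Γ₁ Γ₂ B lam R}

/-- The space `𝒮 = Span_{δ ∉ σ(A_B)} (A_B − δ)⁻¹ Ran (S_{μ₀,B})`. -/
def spaceS (dom : Submodule ℂ H) (T : dom →ₗ[ℂ] H)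
    (Γ₁ : dom →ₗ[ℂ] 𝓗) (Γ₂ : dom →ₗ[ℂ] 𝓚) (B : 𝓚 →L[ℂ] 𝓗) (μ₀ : ℂ) :
    Submodule ℂ H :=
  Submodule.span ℂ {x : H | ∃ (δ : ℂ) (R : H →L[ℂ] H) (v : dom),
    IsResolventAt dom T Γ₁ Γ₂ B δ R ∧ T v = μ₀ • (v : H) ∧ x = R (v : H)}

/-- The space `𝒯 = Span_{μ ∉ σ(A_B)} Ran (S_{μ,B})`. -/
def spaceT (dom : Submodule ℂ H) (T : dom →ₗ[ℂ] H)
    (Γ₁ : dom →ₗ[ℂ] 𝓗) (Γ₂ : dom →ₗ[ℂ] 𝓚) (B : 𝓚 →L[ℂ] 𝓗) :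
    Submodule ℂ H :=
  Submodule.span ℂ {x : H | ∃ (μ : ℂ) (hx : x ∈ dom),
    μ ∈ resolventSetB dom T Γ₁ Γ₂ B ∧ T ⟨x, hx⟩ = μ • x}

/-- `lam₀` is a point of analyticity of the Weyl function `M_B`: on some open
neighbourhood `U` of `lam₀`, for each `f ∈ Ran(Γ₁ − BΓ₂)` there is an analytic
function agreeing with `M_B(·) f` on `U ∩ ρ(A_B)`. -/
def MAnalyticAt (dom : Submodule ℂ H) (T : dom →ₗ[ℂ] H)
    (Γ₁ : dom →ₗ[ℂ] 𝓗) (Γ₂ : dom →ₗ[ℂ] 𝓚) (B : 𝓚 →L[ℂ] 𝓗) (lam₀ : ℂ) : Prop :=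
  ∃ U : Set ℂ, IsOpen U ∧ lam₀ ∈ U ∧
    ∀ f ∈ Set.range (fun u : dom => Γ₁ u - B (Γ₂ u)),
      ∃ m : ℂ → 𝓚, (∀ z ∈ U, AnalyticAt ℂ m z) ∧
        ∀ lam ∈ U ∩ resolventSetB dom T Γ₁ Γ₂ B,
          ∀ u : dom, (T u = lam • (u : H) ∧ Γ₁ u - B (Γ₂ u) = f) → m lam = Γ₂ u

section Aux
variable {dom : Submodule ℂ H} {T : dom →ₗ[ℂ] H}
  {Γ₁ : dom →ₗ[ℂ] 𝓗} {Γ₂ : dom →ₗ[ℂ] 𝓚} {B : 𝓚 →L[ℂ] 𝓗}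

lemma resolvent_unique {lam : ℂ} {R R' : H →L[ℂ] H}
    (h1 : IsResolventAt dom T Γ₁ Γ₂ B lam R)
    (h2 : IsResolventAt dom T Γ₁ Γ₂ B lam R') : R = R' := by
  ext x
  obtain ⟨hm, hbc, heq⟩ := h1.1 x
  have h := h2.2 ⟨R x, hm⟩ hbc
  simpa [heq] using h.symm

/-- First resolvent identity. -/
lemma resolvent_id {lam mu : ℂ} {R S : H →L[ℂ] H}
    (hR : IsResolventAt dom T Γ₁ Γ₂ B lam R)
    (hS : IsResolventAt dom T Γ₁ Γ₂ B mu S) (x : H) :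
    R x - S x = (lam - mu) • R (S x) := by
  obtain ⟨hm, hbc, heq⟩ := hS.1 x
  have h := hR.2 ⟨S x, hm⟩ hbc
  simp only [Submodule.coe_mk] at h
  have hT : T ⟨S x, hm⟩ = x + mu • S x := eq_add_of_sub_eq heq
  rw [hT] at h
  have h2 : x + mu • S x - lam • S x = x + (mu - lam) • S x := by module
  rw [h2] at h
  have h' : R x + (mu - lam) • R (S x) = S x := by
    simpa [map_add, map_smul] using h
  conv_lhs => rw [← h']
  module


lemma resolvent_norm_half {lam mu : ℂ} {R S : H →L[ℂ] H}
    (hR : IsResolventAt dom T Γ₁ Γ₂ B lam R)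
    (hS : IsResolventAt dom T Γ₁ Γ₂ B mu S)
    (h : ‖lam - mu‖ * ‖S‖ ≤ 1/2) : ‖R‖ ≤ 2 * ‖S‖ := by
  have key : ‖R‖ ≤ ‖S‖ + ‖lam - mu‖ * ‖R‖ * ‖S‖ := by
    apply ContinuousLinearMap.opNorm_le_bound
    · positivity
    · intro x
      have hid := resolvent_id hR hS x
      have : R x = S x + (lam - mu) • R (S x) := by rw [← hid]; abel
      rw [this]
      calc ‖S x + (lam - mu) • R (S x)‖ ≤ ‖S x‖ + ‖(lam - mu) • R (S x)‖ := norm_add_le _ _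
        _ ≤ ‖S‖ * ‖x‖ + ‖lam - mu‖ * (‖R‖ * ‖S x‖) := by
            rw [norm_smul]
            gcongr
            · exact S.le_opNorm x
            · exact R.le_opNorm _
        _ ≤ ‖S‖ * ‖x‖ + ‖lam - mu‖ * (‖R‖ * (‖S‖ * ‖x‖)) := by
            gcongr; exact S.le_opNorm x
        _ = (‖S‖ + ‖lam - mu‖ * ‖R‖ * ‖S‖) * ‖x‖ := by ring
  nlinarith [norm_nonneg R, norm_nonneg S]

open Classical in
/-- A choice of resolvent operator at each point of the resolvent set. -/
noncomputable def resC (dom : Submodule ℂ H) (T : dom →ₗ[ℂ] H)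
    (Γ₁ : dom →ₗ[ℂ] 𝓗) (Γ₂ : dom →ₗ[ℂ] 𝓚) (B : 𝓚 →L[ℂ] 𝓗) : ℂ → (H →L[ℂ] H) := fun lam =>
  if h : lam ∈ resolventSetB dom T Γ₁ Γ₂ B then h.choose else 0

lemma resC_spec {lam : ℂ} (h : lam ∈ resolventSetB dom T Γ₁ Γ₂ B) :
    IsResolventAt dom T Γ₁ Γ₂ B lam (resC dom T Γ₁ Γ₂ B lam) := by
  rw [resC, dif_pos h]; exact h.choose_spec

lemma weak_res_hasDerivAt (Φt Φ : H) {mu : ℂ} {O : Set ℂ} (hO : IsOpen O)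
    (hsub : O ⊆ resolventSetB dom T Γ₁ Γ₂ B) (hmu : mu ∈ O) :
    HasDerivAt (fun lam => ⟪Φt, resC dom T Γ₁ Γ₂ B lam Φ⟫_ℂ)
      ⟪Φt, resC dom T Γ₁ Γ₂ B mu (resC dom T Γ₁ Γ₂ B mu Φ)⟫_ℂ mu := by
  set S := resC dom T Γ₁ Γ₂ B mu with hSdef
  have hSres : IsResolventAt dom T Γ₁ Γ₂ B mu S := resC_spec (hsub hmu)
  set L := ⟪Φt, S (S Φ)⟫_ℂ
  set C := ‖Φt‖ * (2 * ‖S‖ * ‖S (S Φ)‖) with hCdef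
  have hC0 : 0 ≤ C := by positivity
  rw [hasDerivAt_iff_tendsto_slope]
  rw [Metric.tendsto_nhdsWithin_nhds]
  intro ε hε
  obtain ⟨ε₂, hε₂, hball⟩ := Metric.isOpen_iff.1 hO mu hmu
  refine ⟨min (min ε₂ ((2 * (‖S‖ + 1))⁻¹)) (ε / (C + 1)), by positivity, ?_⟩
  intro lam hlamne hdist
  have hlam' : lam ∈ Metric.ball mu ε₂ := by
    rw [Metric.mem_ball]
    exact lt_of_lt_of_le hdist (le_trans (min_le_left _ _) (min_le_left _ _))
  have hlamρ : lam ∈ resolventSetB dom T Γ₁ Γ₂ B := hsub (hball hlam')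
  set R := resC dom T Γ₁ Γ₂ B lam with hRdef
  have hRres : IsResolventAt dom T Γ₁ Γ₂ B lam R := resC_spec hlamρ
  have hne : lam - mu ≠ 0 := sub_ne_zero.2 hlamne
  have hnormdist : ‖lam - mu‖ < min (min ε₂ ((2 * (‖S‖ + 1))⁻¹)) (ε / (C + 1)) := by
    rwa [← dist_eq_norm]
  have hhalf : ‖lam - mu‖ * ‖S‖ ≤ 1 / 2 := by
    have h1 : ‖lam - mu‖ ≤ (2 * (‖S‖ + 1))⁻¹ :=
      le_of_lt (lt_of_lt_of_le hnormdist (le_trans (min_le_left _ _) (min_le_right _ _)))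
    have h2 : (2 * (‖S‖ + 1))⁻¹ * ‖S‖ ≤ 1/2 := by
      rw [div_eq_mul_inv]
      rw [inv_mul_le_iff₀ (by positivity)]
      have : 1 * (2 * (‖S‖ + 1))⁻¹ * (2 * (‖S‖ + 1)) = 1 := by
        field_simp
      nlinarith [norm_nonneg S, inv_nonneg.2 (le_of_lt (show (0:ℝ) < 2 * (‖S‖+1) by positivity))]
    calc ‖lam - mu‖ * ‖S‖ ≤ (2 * (‖S‖ + 1))⁻¹ * ‖S‖ := by gcongr
      _ ≤ 1/2 := h2
  have hRnorm : ‖R‖ ≤ 2 * ‖S‖ := resolvent_norm_half hRres hSres hhalf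
  have hslope : slope (fun lam => ⟪Φt, resC dom T Γ₁ Γ₂ B lam Φ⟫_ℂ) mu lam
      = ⟪Φt, R (S Φ)⟫_ℂ := by
    rw [slope_def_field]
    have hid : R Φ - S Φ = (lam - mu) • R (S Φ) := resolvent_id hRres hSres Φ
    rw [div_eq_iff hne]
    rw [← inner_sub_right, hid, inner_smul_right]
    ring
  rw [hslope]
  have hdiff : R (S Φ) - S (S Φ) = (lam - mu) • R (S (S Φ)) := resolvent_id hRres hSres (S Φ)
  have hbound : dist ⟪Φt, R (S Φ)⟫_ℂ L ≤ ‖lam - mu‖ * C := by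
    rw [dist_eq_norm, ← inner_sub_right, hdiff, inner_smul_right]
    rw [norm_mul]
    calc ‖lam - mu‖ * ‖⟪Φt, R (S (S Φ))⟫_ℂ‖
        ≤ ‖lam - mu‖ * (‖Φt‖ * ‖R (S (S Φ))‖) := by
          gcongr; exact norm_inner_le_norm _ _
      _ ≤ ‖lam - mu‖ * (‖Φt‖ * (2 * ‖S‖ * ‖S (S Φ)‖)) := by
          gcongr
          calc ‖R (S (S Φ))‖ ≤ ‖R‖ * ‖S (S Φ)‖ := R.le_opNorm _
            _ ≤ 2 * ‖S‖ * ‖S (S Φ)‖ := by gcongr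
      _ = ‖lam - mu‖ * C := by rw [hCdef]
  calc dist ⟪Φt, R (S Φ)⟫_ℂ L ≤ ‖lam - mu‖ * C := hbound
    _ ≤ (ε / (C + 1)) * C := by
        gcongr
        exact le_of_lt (lt_of_lt_of_le hnormdist (min_le_right _ _))
    _ < ε := by
        rw [div_mul_eq_mul_div, div_lt_iff₀ (by positivity)]
        nlinarith
  
lemma weak_res_diffOn (Φt Φ : H) {O : Set ℂ} (hO : IsOpen O)
    (hsub : O ⊆ resolventSetB dom T Γ₁ Γ₂ B) :
    DifferentiableOn ℂ (fun lam => ⟪Φt, resC dom T Γ₁ Γ₂ B lam Φ⟫_ℂ) O :=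
  fun _ hmu => ((weak_res_hasDerivAt Φt Φ hO hsub hmu).differentiableAt).differentiableWithinAt


open Filter Topology in
lemma res_closed {μ₀ : ℂ} {R₀ : H →L[ℂ] H} (hR₀ : IsResolventAt dom T Γ₁ Γ₂ B μ₀ R₀)
    {c : ℂ} {u h : H} (un : ℕ → dom)
    (hbc : ∀ n, Γ₁ (un n) = B (Γ₂ (un n)))
    (hu : Tendsto (fun n => ((un n : H))) atTop (𝓝 u))
    (hh : Tendsto (fun n => T (un n) - c • ((un n : H))) atTop (𝓝 h)) :
    ∃ hm : u ∈ dom, Γ₁ ⟨u, hm⟩ = B (Γ₂ ⟨u, hm⟩) ∧ T ⟨u, hm⟩ - c • u = h := by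
  set y := h + (c - μ₀) • u with hydef
  have hTu : Tendsto (fun n => T (un n) - μ₀ • ((un n : H))) atTop (𝓝 y) := by
    have : (fun n => T (un n) - μ₀ • ((un n : H)))
        = fun n => (T (un n) - c • ((un n : H))) + (c - μ₀) • ((un n : H)) := by
      funext n; module
    rw [this]
    exact hh.add (hu.const_smul (c - μ₀))
  have hRn : ∀ n, R₀ (T (un n) - μ₀ • ((un n : H))) = ((un n : H)) :=
    fun n => hR₀.2 _ (hbc n)
  have h2 : Tendsto (fun n => R₀ (T (un n) - μ₀ • ((un n : H)))) atTop (𝓝 (R₀ y)) :=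
    (R₀.continuous.tendsto _).comp hTu
  simp only [hRn] at h2
  have hEq : u = R₀ y := tendsto_nhds_unique hu h2
  obtain ⟨hm, hbc₀, heq₀⟩ := hR₀.1 y
  have hmu : u ∈ dom := hEq ▸ hm
  have hsub : (⟨u, hmu⟩ : dom) = ⟨R₀ y, hm⟩ := Subtype.ext hEq
  refine ⟨hmu, ?_, ?_⟩
  · rw [hsub]; exact hbc₀
  · have hT : T ⟨R₀ y, hm⟩ = y + μ₀ • R₀ y := eq_add_of_sub_eq heq₀
    rw [hsub, hEq, hT]
    have hy2 : y = h + (c - μ₀) • R₀ y := by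
      conv_lhs => rw [hydef, hEq]
    calc y + μ₀ • R₀ y - c • R₀ y
        = (h + (c - μ₀) • R₀ y) + μ₀ • R₀ y - c • R₀ y := by rw [← hy2]
      _ = h := by module

open ContinuousLinearMap in
lemma adjoint_resolvent_rev
    {domt : Submodule ℂ H} {Tt : domt →ₗ[ℂ] H} {Γt₁ : domt →ₗ[ℂ] 𝓚} {Γt₂ : domt →ₗ[ℂ] 𝓗}
    (hadj : ∀ v w : H,
      (∃ hv : v ∈ domt, Γt₁ ⟨v, hv⟩ = ContinuousLinearMap.adjoint B (Γt₂ ⟨v, hv⟩) ∧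
          Tt ⟨v, hv⟩ = w) ↔
        ∀ u : dom, Γ₁ u = B (Γ₂ u) → ⟪v, T u⟫_ℂ = ⟪w, (u : H)⟫_ℂ)
    {μ₀ : ℂ} {R₀ : H →L[ℂ] H} (hR₀ : IsResolventAt dom T Γ₁ Γ₂ B μ₀ R₀)
    {δt : ℂ} {Rt : H →L[ℂ] H}
    (hRt : IsResolventAt domt Tt Γt₁ Γt₂ (ContinuousLinearMap.adjoint B) δt Rt) :
    IsResolventAt dom T Γ₁ Γ₂ B ((starRingEnd ℂ) δt) (ContinuousLinearMap.adjoint Rt) := by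
  set c := (starRingEnd ℂ) δt with hcdef
  have part2 : ∀ u : dom, Γ₁ u = B (Γ₂ u) →
      (ContinuousLinearMap.adjoint Rt) (T u - c • (u : H)) = (u : H) := by
    intro u hbc
    apply ext_inner_left ℂ
    intro x
    rw [ContinuousLinearMap.adjoint_inner_right]
    obtain ⟨hm, hbct, heqt⟩ := hRt.1 x
    have hTt : Tt ⟨Rt x, hm⟩ = x + δt • Rt x := eq_add_of_sub_eq heqt
    have h1 : ⟪Rt x, T u⟫_ℂ = ⟪x + δt • Rt x, (u : H)⟫_ℂ :=
      ((hadj (Rt x) (x + δt • Rt x)).mp ⟨hm, hbct, hTt⟩) u hbc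
    rw [inner_sub_right, h1, inner_add_left, inner_smul_left, inner_smul_right, hcdef]
    ring
  constructor
  · intro x
    -- density of the range of A_B - c
    set K := LinearMap.ker (Γ₁ - ((B : 𝓚 →ₗ[ℂ] 𝓗).comp Γ₂)) with hKdef
    set W := Submodule.map (T - c • dom.subtype) K with hWdef
    have hKbc : ∀ u : dom, u ∈ K ↔ Γ₁ u = B (Γ₂ u) := by
      intro u
      simp [hKdef, LinearMap.mem_ker, sub_eq_zero]
    have hmemW : ∀ u : dom, Γ₁ u = B (Γ₂ u) → T u - c • (u : H) ∈ W := by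
      intro u hbc
      refine ⟨u, (hKbc u).2 hbc, ?_⟩
      simp [LinearMap.sub_apply, LinearMap.smul_apply]
    have horth : Wᗮ = ⊥ := by
      rw [Submodule.eq_bot_iff]
      intro y hy
      have hyadj : ∀ u : dom, Γ₁ u = B (Γ₂ u) → ⟪y, T u⟫_ℂ = ⟪δt • y, (u : H)⟫_ℂ := by
        intro u hbc
        have h0 : ⟪T u - c • (u : H), y⟫_ℂ = 0 :=
          (Submodule.mem_orthogonal W y).mp hy _ (hmemW u hbc)
        have h0' : ⟪y, T u - c • (u : H)⟫_ℂ = 0 := by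
          rw [← inner_conj_symm, h0, map_zero]
        rw [inner_sub_right, inner_smul_right, sub_eq_zero] at h0'
        rw [h0', inner_smul_left]
      obtain ⟨hv, hbct, hTt⟩ := (hadj y (δt • y)).mpr hyadj
      have h3 := hRt.2 ⟨y, hv⟩ hbct
      simp only [Submodule.coe_mk] at h3
      rw [hTt] at h3
      simp only [sub_self, map_zero] at h3
      exact h3.symm
    have hdense : W.topologicalClosure = ⊤ :=
      Submodule.topologicalClosure_eq_top_iff.mpr horth
    have hx : x ∈ closure (W : Set H) := by
      have : x ∈ W.topologicalClosure := by rw [hdense]; trivial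
      exact this
    obtain ⟨yn, hyn, hylim⟩ := mem_closure_iff_seq_limit.mp hx
    choose un hunK huneq using hyn
    have hbcn : ∀ n, Γ₁ (un n) = B (Γ₂ (un n)) := fun n => (hKbc (un n)).1 (hunK n)
    have huneq' : ∀ n, T (un n) - c • ((un n : H)) = yn n := by
      intro n
      have := huneq n
      simpa [LinearMap.sub_apply, LinearMap.smul_apply] using this
    have hSy : ∀ n, ((un n : H)) = (ContinuousLinearMap.adjoint Rt) (yn n) := by
      intro n
      rw [← huneq' n, part2 (un n) (hbcn n)]
    have hulim : Filter.Tendsto (fun n => ((un n : H))) Filter.atTop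
        (nhds ((ContinuousLinearMap.adjoint Rt) x)) := by
      simp only [hSy]
      exact ((ContinuousLinearMap.adjoint Rt).continuous.tendsto _).comp hylim
    have hhlim : Filter.Tendsto (fun n => T (un n) - c • ((un n : H))) Filter.atTop (nhds x) := by
      simp only [huneq']
      exact hylim
    exact res_closed hR₀ un hbcn hulim hhlim
  · exact part2


lemma aux_half {d : ℝ} (S : H →L[ℂ] H) (h : d ≤ (2 * (‖S‖ + 1))⁻¹) (hd : 0 ≤ d) :
    d * ‖S‖ ≤ 1 / 2 := by
  have h2 : (2 * (‖S‖ + 1))⁻¹ * ‖S‖ ≤ 1/2 := by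
    rw [div_eq_mul_inv, inv_mul_le_iff₀ (by positivity)]
    nlinarith [norm_nonneg S]
  calc d * ‖S‖ ≤ (2 * (‖S‖ + 1))⁻¹ * ‖S‖ := by gcongr
    _ ≤ 1/2 := h2

lemma res_norm_bound {Kc : Set ℂ} (hK : IsCompact Kc)
    (hsub : Kc ⊆ resolventSetB dom T Γ₁ Γ₂ B) :
    ∃ M : ℝ, 0 ≤ M ∧ ∀ lam ∈ Kc, ‖resC dom T Γ₁ Γ₂ B lam‖ ≤ M := by
  set F := resC dom T Γ₁ Γ₂ B with hF
  have hcover : Kc ⊆ ⋃ mu ∈ Kc, Metric.ball mu ((2 * (‖F mu‖ + 1))⁻¹) := by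
    intro x hx
    refine Set.mem_biUnion hx ?_
    rw [Metric.mem_ball, dist_self]
    positivity
  obtain ⟨t, htK, htfin, htcov⟩ := hK.elim_finite_subcover_image
    (fun mu _ => Metric.isOpen_ball) hcover
  obtain ⟨M, hM⟩ := (htfin.image (fun mu => 2 * ‖F mu‖)).bddAbove
  refine ⟨max M 0, le_max_right _ _, ?_⟩
  intro lam hlam
  obtain ⟨mu, hmu, hball⟩ := Set.mem_iUnion₂.mp (htcov hlam)
  have hmuρ : mu ∈ resolventSetB dom T Γ₁ Γ₂ B := hsub (htK hmu)
  have hlamρ : lam ∈ resolventSetB dom T Γ₁ Γ₂ B := hsub hlam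
  have hhalf : ‖lam - mu‖ * ‖F mu‖ ≤ 1 / 2 := by
    apply aux_half
    · rw [← dist_eq_norm]
      exact le_of_lt (Metric.mem_ball.mp hball)
    · exact norm_nonneg _
  have := resolvent_norm_half (resC_spec hlamρ) (resC_spec hmuρ) hhalf
  refine le_trans this (le_trans ?_ (le_max_left _ _))
  exact hM (Set.mem_image_of_mem _ hmu)

open ContinuousLinearMap in
lemma green_eigen
    {domt : Submodule ℂ H} {Tt : domt →ₗ[ℂ] H} {Γt₁ : domt →ₗ[ℂ] 𝓚} {Γt₂ : domt →ₗ[ℂ] 𝓗}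
    (hGreen : ∀ (u : dom) (v : domt),
      ⟪(v : H), T u⟫_ℂ - ⟪Tt v, (u : H)⟫_ℂ = ⟪Γt₂ v, Γ₁ u⟫_ℂ - ⟪Γt₁ v, Γ₂ u⟫_ℂ)
    {lam mu2 : ℂ} (u : dom) (vt : domt)
    (hu : T u = lam • (u : H)) (hvt : Tt vt = mu2 • (vt : H)) :
    (lam - (starRingEnd ℂ) mu2) * ⟪(vt : H), (u : H)⟫_ℂ
      = ⟪Γt₂ vt, Γ₁ u - B (Γ₂ u)⟫_ℂ
        + ⟪ContinuousLinearMap.adjoint B (Γt₂ vt) - Γt₁ vt, Γ₂ u⟫_ℂ := by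
  have hg := hGreen u vt
  rw [hu, hvt, inner_smul_right, inner_smul_left] at hg
  have hsplit : ⟪Γt₂ vt, Γ₁ u⟫_ℂ
      = ⟪Γt₂ vt, Γ₁ u - B (Γ₂ u)⟫_ℂ + ⟪ContinuousLinearMap.adjoint B (Γt₂ vt), Γ₂ u⟫_ℂ := by
    rw [inner_sub_right, ContinuousLinearMap.adjoint_inner_left]
    ring
  rw [inner_sub_left]
  rw [hsplit] at hg
  ring_nf
  ring_nf at hg
  linear_combination hg


lemma inner_inv_smul {w X Y : H} {e : ℂ} (he : e ≠ 0) (h : X = e • Y) :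
    ⟪w, Y⟫_ℂ = e⁻¹ * ⟪w, X⟫_ℂ := by
  rw [h, inner_smul_right]
  field_simp

open ContinuousLinearMap Metric in
lemma core_generator
    {domt : Submodule ℂ H} {Tt : domt →ₗ[ℂ] H} {Γt₁ : domt →ₗ[ℂ] 𝓚} {Γt₂ : domt →ₗ[ℂ] 𝓗}
    (hGreen : ∀ (u : dom) (v : domt),
      ⟪(v : H), T u⟫_ℂ - ⟪Tt v, (u : H)⟫_ℂ = ⟪Γt₂ v, Γ₁ u⟫_ℂ - ⟪Γt₁ v, Γ₂ u⟫_ℂ)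
    (hadj : ∀ v w : H,
      (∃ hv : v ∈ domt, Γt₁ ⟨v, hv⟩ = ContinuousLinearMap.adjoint B (Γt₂ ⟨v, hv⟩) ∧
          Tt ⟨v, hv⟩ = w) ↔
        ∀ u : dom, Γ₁ u = B (Γ₂ u) → ⟪v, T u⟫_ℂ = ⟪w, (u : H)⟫_ℂ)
    {μ₀ : ℂ} {R₀ : H →L[ℂ] H} (hR₀ : IsResolventAt dom T Γ₁ Γ₂ B μ₀ R₀)
    {lam₀ : ℂ} (hM : MAnalyticAt dom T Γ₁ Γ₂ B lam₀)
    (hlam₀ : lam₀ ∉ resolventSetB dom T Γ₁ Γ₂ B)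
    {δ : ℂ} {Rδ : H →L[ℂ] H} (hRδ : IsResolventAt dom T Γ₁ Γ₂ B δ Rδ)
    (v : dom) (hv : T v = μ₀ • (v : H))
    {μt₀ : ℂ} {Rt0 : H →L[ℂ] H}
    (hRt0 : IsResolventAt domt Tt Γt₁ Γt₂ (ContinuousLinearMap.adjoint B) μt₀ Rt0)
    {δt : ℂ} {Rtδ : H →L[ℂ] H}
    (hRtδ : IsResolventAt domt Tt Γt₁ Γt₂ (ContinuousLinearMap.adjoint B) δt Rtδ)
    (vt : domt) (hvt : Tt vt = μt₀ • (vt : H)) :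
    ∃ (g : ℂ → ℂ) (ε : ℝ), 0 < ε ∧ AnalyticAt ℂ g lam₀ ∧
      ∀ lam ∈ Metric.ball lam₀ ε \ {lam₀}, lam ∈ resolventSetB dom T Γ₁ Γ₂ B →
        ∀ R : H →L[ℂ] H, IsResolventAt dom T Γ₁ Γ₂ B lam R →
          g lam = ⟪Rtδ (vt : H), R (Rδ (v : H))⟫_ℂ := by
  obtain ⟨U, hUopen, hU0, hMf⟩ := hM
  set f := Γ₁ v - B (Γ₂ v) with hfdef
  obtain ⟨m, hman, hmval⟩ := hMf f ⟨v, rfl⟩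
  set S := ContinuousLinearMap.adjoint Rtδ with hSdef
  set c := (starRingEnd ℂ) δt with hcdef
  set bb := (starRingEnd ℂ) μt₀ with hbbdef
  have hS : IsResolventAt dom T Γ₁ Γ₂ B c S := adjoint_resolvent_rev hadj hR₀ hRtδ
  have hcρ : c ∈ resolventSetB dom T Γ₁ Γ₂ B := ⟨S, hS⟩
  have hbρ : bb ∈ resolventSetB dom T Γ₁ Γ₂ B :=
    ⟨ContinuousLinearMap.adjoint Rt0, adjoint_resolvent_rev hadj hR₀ hRt0⟩
  have hδρ : δ ∈ resolventSetB dom T Γ₁ Γ₂ B := ⟨Rδ, hRδ⟩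
  have hμρ : μ₀ ∈ resolventSetB dom T Γ₁ Γ₂ B := ⟨R₀, hR₀⟩
  have hδne : δ ≠ lam₀ := fun h => hlam₀ (h ▸ hδρ)
  have hcne : c ≠ lam₀ := fun h => hlam₀ (h ▸ hcρ)
  have hbne : bb ≠ lam₀ := fun h => hlam₀ (h ▸ hbρ)
  have hμne : μ₀ ≠ lam₀ := fun h => hlam₀ (h ▸ hμρ)
  set vH := (v : H) with hvHdef
  set vtH := (vt : H) with hvtHdef
  set K₀ := ⟪vtH, S (Rδ vH)⟫_ℂ with hK₀def
  set s := ⟪vtH, S vH⟫_ℂ with hsdef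
  set a := ⟪vtH, vH⟫_ℂ with hadef
  set p := ⟪Γt₂ vt, f⟫_ℂ with hpdef
  set q := ContinuousLinearMap.adjoint B (Γt₂ vt) - Γt₁ vt with hqdef
  set g : ℂ → ℂ := fun lam => (lam - δ)⁻¹ *
    ((c - lam)⁻¹ * (s - (lam - μ₀)⁻¹ * ((lam - bb)⁻¹ * (p + ⟪q, m lam⟫_ℂ) - a)) - K₀)
    with hgdef
  obtain ⟨εU, hεU, hballU⟩ := Metric.isOpen_iff.mp hUopen lam₀ hU0
  set ε := min εU (min (min ‖δ - lam₀‖ ‖c - lam₀‖) (min ‖bb - lam₀‖ ‖μ₀ - lam₀‖)) with hεdef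
  have hε : 0 < ε := by
    refine lt_min hεU (lt_min (lt_min ?_ ?_) (lt_min ?_ ?_)) <;>
      rw [norm_pos_iff, sub_ne_zero] <;> assumption
  refine ⟨g, ε, hε, ?_, ?_⟩
  · -- analyticity at lam₀
    have hm0 : AnalyticAt ℂ m lam₀ := hman lam₀ hU0
    have hinner : AnalyticAt ℂ (fun lam => ⟪q, m lam⟫_ℂ) lam₀ :=
      ((innerSL ℂ q).analyticAt _).comp hm0
    have h1 : AnalyticAt ℂ (fun lam => (lam - δ)⁻¹) lam₀ := by
      apply AnalyticAt.inv
      · exact (analyticAt_id).sub analyticAt_const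
      · rw [sub_ne_zero]; exact Ne.symm hδne
    have h2 : AnalyticAt ℂ (fun lam => (c - lam)⁻¹) lam₀ := by
      apply AnalyticAt.inv
      · exact analyticAt_const.sub analyticAt_id
      · rw [sub_ne_zero]; exact hcne
    have h3 : AnalyticAt ℂ (fun lam => (lam - μ₀)⁻¹) lam₀ := by
      apply AnalyticAt.inv
      · exact (analyticAt_id).sub analyticAt_const
      · rw [sub_ne_zero]; exact Ne.symm hμne
    have h4 : AnalyticAt ℂ (fun lam => (lam - bb)⁻¹) lam₀ := by
      apply AnalyticAt.inv
      · exact (analyticAt_id).sub analyticAt_const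
      · rw [sub_ne_zero]; exact Ne.symm hbne
    exact h1.mul ((h2.mul (analyticAt_const.sub (h3.mul ((h4.mul
      (analyticAt_const.add hinner)).sub analyticAt_const)))).sub analyticAt_const)
  · intro lam hlam hρ R hR
    obtain ⟨hball, hne0⟩ := hlam
    have hne0' : lam ≠ lam₀ := hne0
    have hdist : ‖lam - lam₀‖ < ε := by rw [← dist_eq_norm]; exact Metric.mem_ball.mp hball
    have hεδ : ε ≤ ‖δ - lam₀‖ :=
      le_trans (min_le_right _ _) (le_trans (min_le_left _ _) (min_le_left _ _))
    have hεc : ε ≤ ‖c - lam₀‖ :=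
      le_trans (min_le_right _ _) (le_trans (min_le_left _ _) (min_le_right _ _))
    have hεbb : ε ≤ ‖bb - lam₀‖ :=
      le_trans (min_le_right _ _) (le_trans (min_le_right _ _) (min_le_left _ _))
    have hεμ : ε ≤ ‖μ₀ - lam₀‖ :=
      le_trans (min_le_right _ _) (le_trans (min_le_right _ _) (min_le_right _ _))
    have hlamδ : lam ≠ δ := fun h => absurd hdist (not_lt.2 (h ▸ hεδ))
    have hlamc : lam ≠ c := fun h => absurd hdist (not_lt.2 (h ▸ hεc))
    have hlamb : lam ≠ bb := fun h => absurd hdist (not_lt.2 (h ▸ hεbb))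
    have hlamμ : lam ≠ μ₀ := fun h => absurd hdist (not_lt.2 (h ▸ hεμ))
    have hlamU : lam ∈ U := by
      apply hballU
      rw [Metric.mem_ball]
      exact lt_of_lt_of_le (Metric.mem_ball.mp hball) (min_le_left _ _)
    have hneδ : lam - δ ≠ 0 := sub_ne_zero.2 hlamδ
    have hnec : c - lam ≠ 0 := sub_ne_zero.2 (Ne.symm hlamc)
    have hneb : lam - bb ≠ 0 := sub_ne_zero.2 hlamb
    have hneμ : lam - μ₀ ≠ 0 := sub_ne_zero.2 hlamμ
    -- the eigenvector u
    obtain ⟨hmem, hbcR, heqR⟩ := hR.1 vH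
    have hTRv : T ⟨R vH, hmem⟩ = vH + lam • R vH := eq_add_of_sub_eq heqR
    set uelt : dom := (lam - μ₀) • (⟨R vH, hmem⟩ : dom) + v with hueltdef
    have huH : (uelt : H) = (lam - μ₀) • R vH + vH := by
      simp [hueltdef, hvHdef]
    have hTu : T uelt = lam • (uelt : H) := by
      rw [hueltdef, map_add, map_smul, hTRv, hv, huH]
      module
    have hfu : Γ₁ uelt - B (Γ₂ uelt) = f := by
      rw [hueltdef, map_add, map_smul, map_add, map_smul, map_add, map_smul, hbcR, hfdef]
      module
    have hmu : m lam = Γ₂ uelt := hmval lam ⟨hlamU, hρ⟩ uelt ⟨hTu, hfu⟩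
    have hgreen := green_eigen (B := B) hGreen uelt vt hTu hvt
    rw [hfu, ← hmu] at hgreen
    have I5 : ⟪vtH, (uelt : H)⟫_ℂ = (lam - bb)⁻¹ * (p + ⟪q, m lam⟫_ℂ) := by
      rw [inv_mul_eq_div, eq_div_iff hneb]
      rw [hpdef, hqdef]
      linear_combination hgreen
    have I4 : ⟪vtH, R vH⟫_ℂ = (lam - μ₀)⁻¹ * (⟪vtH, (uelt : H)⟫_ℂ - a) := by
      have hvec : (uelt : H) - vH = (lam - μ₀) • R vH := by rw [huH]; abel
      have h := inner_inv_smul (w := vtH) hneμ hvec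
      rw [h, inner_sub_right, hadef]
    have I3 : ⟪vtH, S (R vH)⟫_ℂ = (c - lam)⁻¹ * (s - ⟪vtH, R vH⟫_ℂ) := by
      have hvec : S vH - R vH = (c - lam) • S (R vH) := resolvent_id hS hR vH
      have h := inner_inv_smul (w := vtH) hnec hvec
      rw [h, inner_sub_right, hsdef]
    have I2 : ⟪vtH, S (R (Rδ vH))⟫_ℂ = (lam - δ)⁻¹ * (⟪vtH, S (R vH)⟫_ℂ - K₀) := by
      have hvec0 : R vH - Rδ vH = (lam - δ) • R (Rδ vH) := resolvent_id hR hRδ vH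
      have hvec : S (R vH) - S (Rδ vH) = (lam - δ) • S (R (Rδ vH)) := by
        rw [← map_sub, hvec0, map_smul]
      have h := inner_inv_smul (w := vtH) hneδ hvec
      rw [h, inner_sub_right, hK₀def]
    have hfinal : ⟪Rtδ vtH, R (Rδ vH)⟫_ℂ = ⟪vtH, S (R (Rδ vH))⟫_ℂ := by
      rw [hSdef, ContinuousLinearMap.adjoint_inner_right]
    rw [hfinal, I2, I3, I4, I5, hgdef]
  

open ContinuousLinearMap Metric in
lemma core_spanPhi
    {domt : Submodule ℂ H} {Tt : domt →ₗ[ℂ] H} {Γt₁ : domt →ₗ[ℂ] 𝓚} {Γt₂ : domt →ₗ[ℂ] 𝓗}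
    (hGreen : ∀ (u : dom) (v : domt),
      ⟪(v : H), T u⟫_ℂ - ⟪Tt v, (u : H)⟫_ℂ = ⟪Γt₂ v, Γ₁ u⟫_ℂ - ⟪Γt₁ v, Γ₂ u⟫_ℂ)
    (hadj : ∀ v w : H,
      (∃ hv : v ∈ domt, Γt₁ ⟨v, hv⟩ = ContinuousLinearMap.adjoint B (Γt₂ ⟨v, hv⟩) ∧
          Tt ⟨v, hv⟩ = w) ↔
        ∀ u : dom, Γ₁ u = B (Γ₂ u) → ⟪v, T u⟫_ℂ = ⟪w, (u : H)⟫_ℂ)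
    {μ₀ : ℂ} {R₀ : H →L[ℂ] H} (hR₀ : IsResolventAt dom T Γ₁ Γ₂ B μ₀ R₀)
    {lam₀ : ℂ} (hM : MAnalyticAt dom T Γ₁ Γ₂ B lam₀)
    (hlam₀ : lam₀ ∉ resolventSetB dom T Γ₁ Γ₂ B)
    {μt₀ : ℂ} {Rt0 : H →L[ℂ] H}
    (hRt0 : IsResolventAt domt Tt Γt₁ Γt₂ (ContinuousLinearMap.adjoint B) μt₀ Rt0)
    {δt : ℂ} {Rtδ : H →L[ℂ] H}
    (hRtδ : IsResolventAt domt Tt Γt₁ Γt₂ (ContinuousLinearMap.adjoint B) δt Rtδ)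
    (vt : domt) (hvt : Tt vt = μt₀ • (vt : H))
    {Φ : H} (hΦ : Φ ∈ spaceS dom T Γ₁ Γ₂ B μ₀) :
    ∃ (g : ℂ → ℂ) (ε : ℝ), 0 < ε ∧ AnalyticAt ℂ g lam₀ ∧
      ∀ lam ∈ Metric.ball lam₀ ε \ {lam₀}, lam ∈ resolventSetB dom T Γ₁ Γ₂ B →
        ∀ R : H →L[ℂ] H, IsResolventAt dom T Γ₁ Γ₂ B lam R →
          g lam = ⟪Rtδ (vt : H), R Φ⟫_ℂ := by
  induction hΦ using Submodule.span_induction with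
  | mem x hx =>
    obtain ⟨δ, Rδ, v, hRδ, hv, rfl⟩ := hx
    exact core_generator hGreen hadj hR₀ hM hlam₀ hRδ v hv hRt0 hRtδ vt hvt
  | zero =>
    refine ⟨0, 1, one_pos, analyticAt_const, ?_⟩
    intro lam _ _ R _
    simp
  | add x y hx hy ihx ihy =>
    obtain ⟨g₁, ε₁, hε₁, han₁, heq₁⟩ := ihx
    obtain ⟨g₂, ε₂, hε₂, han₂, heq₂⟩ := ihy
    refine ⟨g₁ + g₂, min ε₁ ε₂, lt_min hε₁ hε₂, han₁.add han₂, ?_⟩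
    intro lam hlam hρ R hR
    obtain ⟨hball, hne⟩ := hlam
    have hb₁ : lam ∈ Metric.ball lam₀ ε₁ \ {lam₀} :=
      ⟨Metric.mem_ball.2 (lt_of_lt_of_le (Metric.mem_ball.1 hball) (min_le_left _ _)), hne⟩
    have hb₂ : lam ∈ Metric.ball lam₀ ε₂ \ {lam₀} :=
      ⟨Metric.mem_ball.2 (lt_of_lt_of_le (Metric.mem_ball.1 hball) (min_le_right _ _)), hne⟩
    rw [Pi.add_apply, heq₁ lam hb₁ hρ R hR, heq₂ lam hb₂ hρ R hR, map_add, inner_add_right]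
  | smul a x hx ihx =>
    obtain ⟨g₁, ε₁, hε₁, han₁, heq₁⟩ := ihx
    refine ⟨fun lam => a * g₁ lam, ε₁, hε₁, analyticAt_const.mul han₁, ?_⟩
    intro lam hlam hρ R hR
    rw [map_smul, inner_smul_right, ← heq₁ lam hlam hρ R hR]

open ContinuousLinearMap Metric in
lemma core_span
    {domt : Submodule ℂ H} {Tt : domt →ₗ[ℂ] H} {Γt₁ : domt →ₗ[ℂ] 𝓚} {Γt₂ : domt →ₗ[ℂ] 𝓗}
    (hGreen : ∀ (u : dom) (v : domt),
      ⟪(v : H), T u⟫_ℂ - ⟪Tt v, (u : H)⟫_ℂ = ⟪Γt₂ v, Γ₁ u⟫_ℂ - ⟪Γt₁ v, Γ₂ u⟫_ℂ)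
    (hadj : ∀ v w : H,
      (∃ hv : v ∈ domt, Γt₁ ⟨v, hv⟩ = ContinuousLinearMap.adjoint B (Γt₂ ⟨v, hv⟩) ∧
          Tt ⟨v, hv⟩ = w) ↔
        ∀ u : dom, Γ₁ u = B (Γ₂ u) → ⟪v, T u⟫_ℂ = ⟪w, (u : H)⟫_ℂ)
    {μ₀ : ℂ} {R₀ : H →L[ℂ] H} (hR₀ : IsResolventAt dom T Γ₁ Γ₂ B μ₀ R₀)
    {lam₀ : ℂ} (hM : MAnalyticAt dom T Γ₁ Γ₂ B lam₀)
    (hlam₀ : lam₀ ∉ resolventSetB dom T Γ₁ Γ₂ B)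
    {μt₀ : ℂ} {Rt0 : H →L[ℂ] H}
    (hRt0 : IsResolventAt domt Tt Γt₁ Γt₂ (ContinuousLinearMap.adjoint B) μt₀ Rt0)
    {Φ : H} (hΦ : Φ ∈ spaceS dom T Γ₁ Γ₂ B μ₀)
    {Φt : H} (hΦt : Φt ∈ spaceS domt Tt Γt₁ Γt₂ (ContinuousLinearMap.adjoint B) μt₀) :
    ∃ (g : ℂ → ℂ) (ε : ℝ), 0 < ε ∧ AnalyticAt ℂ g lam₀ ∧
      ∀ lam ∈ Metric.ball lam₀ ε \ {lam₀}, lam ∈ resolventSetB dom T Γ₁ Γ₂ B →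
        ∀ R : H →L[ℂ] H, IsResolventAt dom T Γ₁ Γ₂ B lam R →
          g lam = ⟪Φt, R Φ⟫_ℂ := by
  induction hΦt using Submodule.span_induction with
  | mem x hx =>
    obtain ⟨δt, Rtδ, vt, hRtδ, hvt, rfl⟩ := hx
    exact core_spanPhi hGreen hadj hR₀ hM hlam₀ hRt0 hRtδ vt hvt hΦ
  | zero =>
    refine ⟨0, 1, one_pos, analyticAt_const, ?_⟩
    intro lam _ _ R _
    simp
  | add x y hx hy ihx ihy =>
    obtain ⟨g₁, ε₁, hε₁, han₁, heq₁⟩ := ihx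
    obtain ⟨g₂, ε₂, hε₂, han₂, heq₂⟩ := ihy
    refine ⟨g₁ + g₂, min ε₁ ε₂, lt_min hε₁ hε₂, han₁.add han₂, ?_⟩
    intro lam hlam hρ R hR
    obtain ⟨hball, hne⟩ := hlam
    have hb₁ : lam ∈ Metric.ball lam₀ ε₁ \ {lam₀} :=
      ⟨Metric.mem_ball.2 (lt_of_lt_of_le (Metric.mem_ball.1 hball) (min_le_left _ _)), hne⟩
    have hb₂ : lam ∈ Metric.ball lam₀ ε₂ \ {lam₀} :=
      ⟨Metric.mem_ball.2 (lt_of_lt_of_le (Metric.mem_ball.1 hball) (min_le_right _ _)), hne⟩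
    rw [Pi.add_apply, heq₁ lam hb₁ hρ R hR, heq₂ lam hb₂ hρ R hR, inner_add_left]
  | smul a x hx ihx =>
    obtain ⟨g₁, ε₁, hε₁, han₁, heq₁⟩ := ihx
    refine ⟨fun lam => (starRingEnd ℂ) a * g₁ lam, ε₁, hε₁, analyticAt_const.mul han₁, ?_⟩
    intro lam hlam hρ R hR
    rw [inner_smul_left, ← heq₁ lam hlam hρ R hR]


open Metric Topology in
lemma glue_pair {lam₀ : ℂ} {r : ℝ} (hr : 0 < r)
    (hpunct : Metric.ball lam₀ r \ {lam₀} ⊆ resolventSetB dom T Γ₁ Γ₂ B)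
    {Φt Φ : H} {g₀ : ℂ → ℂ} {ε : ℝ} (hε : 0 < ε) (han : AnalyticAt ℂ g₀ lam₀)
    (heq : ∀ lam ∈ Metric.ball lam₀ ε \ {lam₀}, lam ∈ resolventSetB dom T Γ₁ Γ₂ B →
        ∀ R : H →L[ℂ] H, IsResolventAt dom T Γ₁ Γ₂ B lam R → g₀ lam = ⟪Φt, R Φ⟫_ℂ) :
    ∃ G : ℂ → ℂ, (∀ z ∈ Metric.ball lam₀ r, AnalyticAt ℂ G z) ∧
      ∀ lam ∈ Metric.ball lam₀ r \ {lam₀}, G lam = ⟪Φt, resC dom T Γ₁ Γ₂ B lam Φ⟫_ℂ := by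
  classical
  set wk : ℂ → ℂ := fun lam => ⟪Φt, resC dom T Γ₁ Γ₂ B lam Φ⟫_ℂ with hwkdef
  set G : ℂ → ℂ := Function.update wk lam₀ (g₀ lam₀) with hGdef
  have hGne : ∀ lam : ℂ, lam ≠ lam₀ → G lam = wk lam := by
    intro lam hne
    simp [hGdef, Function.update_of_ne hne]
  have hOopen : IsOpen (Metric.ball lam₀ r \ {lam₀}) :=
    Metric.isOpen_ball.sdiff isClosed_singleton
  have hwkdiff : DifferentiableOn ℂ wk (Metric.ball lam₀ r \ {lam₀}) :=
    weak_res_diffOn Φt Φ hOopen hpunct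
  refine ⟨G, ?_, fun lam hlam => hGne lam hlam.2⟩
  intro z hz
  by_cases hzc : z = lam₀
  · subst hzc
    -- G agrees with g₀ near z
    apply han.congr
    have hball : Metric.ball z (min ε r) ∈ 𝓝 z := Metric.ball_mem_nhds _ (lt_min hε hr)
    filter_upwards [hball] with x hx
    by_cases hxc : x = z
    · subst hxc; simp [hGdef]
    · have hxε : x ∈ Metric.ball z ε \ {z} :=
        ⟨Metric.mem_ball.2 (lt_of_lt_of_le (Metric.mem_ball.1 hx) (min_le_left _ _)), hxc⟩
      have hxr : x ∈ Metric.ball z r \ {z} :=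
        ⟨Metric.mem_ball.2 (lt_of_lt_of_le (Metric.mem_ball.1 hx) (min_le_right _ _)), hxc⟩
      have hxρ : x ∈ resolventSetB dom T Γ₁ Γ₂ B := hpunct hxr
      have h5 := heq x hxε hxρ _ (resC_spec hxρ)
      rw [hGne x hxc]
      simp only [hwkdef]
      exact h5
  · have hwk_an : AnalyticAt ℂ wk z :=
      hwkdiff.analyticAt (hOopen.mem_nhds ⟨hz, hzc⟩)
    apply hwk_an.congr
    have hopen : IsOpen {x : ℂ | x ≠ lam₀} := isOpen_compl_singleton
    filter_upwards [hopen.mem_nhds hzc] with x hx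
    exact (hGne x hx).symm


open Metric Topology Filter in
lemma closure_step {lam₀ : ℂ} {r : ℝ} (hr : 0 < r)
    (hpunct : Metric.ball lam₀ r \ {lam₀} ⊆ resolventSetB dom T Γ₁ Γ₂ B)
    {Φ Φt : H} (Φn Φtn : ℕ → H)
    (hΦn : Tendsto Φn atTop (𝓝 Φ)) (hΦtn : Tendsto Φtn atTop (𝓝 Φt))
    (Gn : ℕ → ℂ → ℂ)
    (hGan : ∀ n, ∀ z ∈ Metric.ball lam₀ r, AnalyticAt ℂ (Gn n) z)
    (hGeq : ∀ n, ∀ lam ∈ Metric.ball lam₀ r \ {lam₀},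
      Gn n lam = ⟪Φtn n, resC dom T Γ₁ Γ₂ B lam (Φn n)⟫_ℂ) :
    ∃ g : ℂ → ℂ, (∀ z ∈ Metric.ball lam₀ r, AnalyticAt ℂ g z) ∧
      ∀ lam ∈ Metric.ball lam₀ r \ {lam₀}, ∀ R : H →L[ℂ] H,
        IsResolventAt dom T Γ₁ Γ₂ B lam R → g lam = ⟪Φt, R Φ⟫_ℂ := by
  classical
  set F := resC dom T Γ₁ Γ₂ B with hFdef
  set ρ' := r / 2 with hρ'def
  have hρ' : 0 < ρ' := by positivity
  have hρ'r : ρ' < r := by rw [hρ'def]; linarith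
  have hball_sub : Metric.ball lam₀ ρ' ⊆ Metric.ball lam₀ r := Metric.ball_subset_ball (le_of_lt hρ'r)
  have hcball_sub : Metric.closedBall lam₀ ρ' ⊆ Metric.ball lam₀ r :=
    Metric.closedBall_subset_ball hρ'r
  have hsphere_sub : Metric.sphere lam₀ ρ' ⊆ Metric.ball lam₀ r \ {lam₀} := by
    intro z hz
    have hd : dist z lam₀ = ρ' := Metric.mem_sphere.mp hz
    constructor
    · rw [Metric.mem_ball, hd]; exact hρ'r
    · intro hzz
      rw [Set.mem_singleton_iff] at hzz
      rw [hzz, dist_self] at hd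
      exact absurd hd.symm (ne_of_gt hρ')
  obtain ⟨M, hM0, hMb⟩ := res_norm_bound (isCompact_sphere lam₀ ρ')
    (fun z hz => hpunct (hsphere_sub hz))
  -- bound on the sequences
  obtain ⟨R₁, hR₁pos, hR₁⟩ := cauchySeq_bdd hΦn.cauchySeq
  obtain ⟨R₂, hR₂pos, hR₂⟩ := cauchySeq_bdd hΦtn.cauchySeq
  set K := max (‖Φn 0‖ + R₁) (‖Φtn 0‖ + R₂) with hKdef
  have hK0 : 0 ≤ K := le_trans (by positivity) (le_max_left _ _)
  have hKΦ : ∀ n, ‖Φn n‖ ≤ K := by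
    intro n
    have h1 : ‖Φn n‖ ≤ ‖Φn 0‖ + dist (Φn n) (Φn 0) := by
      rw [dist_eq_norm]
      have := norm_add_le (Φn 0) (Φn n - Φn 0)
      simpa using this
    exact le_trans (le_trans h1 (by linarith [hR₁ n 0])) (le_max_left _ _)
  have hKΦt : ∀ n, ‖Φtn n‖ ≤ K := by
    intro n
    have h1 : ‖Φtn n‖ ≤ ‖Φtn 0‖ + dist (Φtn n) (Φtn 0) := by
      rw [dist_eq_norm]
      have := norm_add_le (Φtn 0) (Φtn n - Φtn 0)
      simpa using this
    exact le_trans (le_trans h1 (by linarith [hR₂ n 0])) (le_max_right _ _)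
  -- sphere estimate
  have hsphere_est : ∀ n m : ℕ, ∀ x ∈ Metric.sphere lam₀ ρ',
      ‖Gn n x - Gn m x‖ ≤ M * (dist (Φtn n) (Φtn m) * K + K * dist (Φn n) (Φn m)) := by
    intro n m x hx
    have hx' := hsphere_sub hx
    have hxρ : x ∈ resolventSetB dom T Γ₁ Γ₂ B := hpunct hx'
    have hdiff : Gn n x - Gn m x
        = ⟪Φtn n - Φtn m, F x (Φn n)⟫_ℂ + ⟪Φtn m, F x (Φn n - Φn m)⟫_ℂ := by
      rw [hGeq n x hx', hGeq m x hx', inner_sub_left, map_sub, inner_sub_right]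
      ring
    rw [hdiff]
    have hFx : ‖F x‖ ≤ M := hMb x hx
    calc ‖⟪Φtn n - Φtn m, F x (Φn n)⟫_ℂ + ⟪Φtn m, F x (Φn n - Φn m)⟫_ℂ‖
        ≤ ‖⟪Φtn n - Φtn m, F x (Φn n)⟫_ℂ‖ + ‖⟪Φtn m, F x (Φn n - Φn m)⟫_ℂ‖ :=
          norm_add_le _ _
      _ ≤ ‖Φtn n - Φtn m‖ * ‖F x (Φn n)‖ + ‖Φtn m‖ * ‖F x (Φn n - Φn m)‖ := by
          gcongr <;> exact norm_inner_le_norm _ _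
      _ ≤ ‖Φtn n - Φtn m‖ * (M * ‖Φn n‖) + ‖Φtn m‖ * (M * ‖Φn n - Φn m‖) := by
          gcongr
          · exact le_trans ((F x).le_opNorm _) (by gcongr)
          · exact le_trans ((F x).le_opNorm _) (by gcongr)
      _ ≤ ‖Φtn n - Φtn m‖ * (M * K) + K * (M * ‖Φn n - Φn m‖) := by
          gcongr
          · exact hKΦ n
          · exact hKΦt m
      _ = M * (‖Φtn n - Φtn m‖ * K + K * ‖Φn n - Φn m‖) := by ring
      _ = M * (dist (Φtn n) (Φtn m) * K + K * dist (Φn n) (Φn m)) := by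
          rw [dist_eq_norm, dist_eq_norm]
  -- max modulus: extend estimate to the closed ball
  have hcball_est : ∀ n m : ℕ, ∀ x ∈ Metric.closedBall lam₀ ρ',
      ‖Gn n x - Gn m x‖ ≤ M * (dist (Φtn n) (Φtn m) * K + K * dist (Φn n) (Φn m)) := by
    intro n m x hx
    have hdc : DiffContOnCl ℂ (fun z => Gn n z - Gn m z) (Metric.ball lam₀ ρ') := by
      constructor
      · intro z hz
        exact (((hGan n z (hball_sub hz)).sub (hGan m z
          (hball_sub hz))).differentiableAt).differentiableWithinAt
      · rw [closure_ball lam₀ (ne_of_gt hρ')]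
        intro z hz
        exact (((hGan n z (hcball_sub hz)).sub (hGan m z
          (hcball_sub hz))).continuousAt).continuousWithinAt
    have hfr : ∀ z ∈ frontier (Metric.ball lam₀ ρ'),
        ‖Gn n z - Gn m z‖ ≤ M * (dist (Φtn n) (Φtn m) * K + K * dist (Φn n) (Φn m)) := by
      rw [frontier_ball lam₀ (ne_of_gt hρ')]
      exact hsphere_est n m
    have hxcl : x ∈ closure (Metric.ball lam₀ ρ') := by
      rwa [closure_ball lam₀ (ne_of_gt hρ')]
    exact Complex.norm_le_of_forall_mem_frontier_norm_le Metric.isBounded_ball hdc hfr hxcl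
  -- uniform Cauchy on the closed ball
  have hUC : UniformCauchySeqOn Gn atTop (Metric.closedBall lam₀ ρ') := by
    rw [Metric.uniformCauchySeqOn_iff]
    intro ε hε
    set ε' := ε / (2 * (M + 1) * (K + 1)) with hε'def
    have hε' : 0 < ε' := by positivity
    obtain ⟨N₁, hN₁⟩ := Metric.cauchySeq_iff.mp hΦn.cauchySeq ε' hε'
    obtain ⟨N₂, hN₂⟩ := Metric.cauchySeq_iff.mp hΦtn.cauchySeq ε' hε'
    refine ⟨max N₁ N₂, ?_⟩
    intro n hn m hm x hx
    rw [dist_eq_norm]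
    have h1 := hcball_est n m x hx
    have ha := hN₂ n (le_trans (le_max_right _ _) hn) m (le_trans (le_max_right _ _) hm)
    have hb := hN₁ n (le_trans (le_max_left _ _) hn) m (le_trans (le_max_left _ _) hm)
    have hd1 : 0 ≤ dist (Φtn n) (Φtn m) := dist_nonneg
    have hd2 : 0 ≤ dist (Φn n) (Φn m) := dist_nonneg
    calc ‖Gn n x - Gn m x‖ ≤ M * (dist (Φtn n) (Φtn m) * K + K * dist (Φn n) (Φn m)) := h1
      _ < ε := by
          have hee : ε = 2 * (M + 1) * (K + 1) * ε' := by
            rw [hε'def]; field_simp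
          rw [hee]
          nlinarith [mul_le_mul_of_nonneg_left (le_of_lt ha) (mul_nonneg hM0 hK0),
            mul_le_mul_of_nonneg_left (le_of_lt hb) (mul_nonneg hM0 hK0),
            mul_pos (mul_pos (show (0:ℝ) < M + 1 by linarith) (show (0:ℝ) < K + 1 by linarith)) hε',
            hε'.le]
  -- pointwise limit
  have hlam₀cb : lam₀ ∈ Metric.closedBall lam₀ ρ' := Metric.mem_closedBall_self (le_of_lt hρ')
  have hcs : CauchySeq (fun n => Gn n lam₀) := by
    rw [Metric.cauchySeq_iff]
    intro ε hε
    obtain ⟨N, hN⟩ := Metric.uniformCauchySeqOn_iff.mp hUC ε hε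
    exact ⟨N, fun m hm n hn => hN m hm n hn lam₀ hlam₀cb⟩
  obtain ⟨l₀, hl₀⟩ := cauchySeq_tendsto_of_complete hcs
  set wk : ℂ → ℂ := fun lam => ⟪Φt, F lam Φ⟫_ℂ with hwkdef
  set g : ℂ → ℂ := Function.update wk lam₀ l₀ with hgdef
  have hgne : ∀ lam : ℂ, lam ≠ lam₀ → g lam = wk lam := by
    intro lam hne
    simp [hgdef, Function.update_of_ne hne]
  -- pointwise convergence on the closed ball
  have hptws : ∀ x ∈ Metric.closedBall lam₀ ρ', Tendsto (fun n => Gn n x) atTop (𝓝 (g x)) := by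
    intro x hx
    by_cases hxc : x = lam₀
    · subst hxc
      have hgx : g x = l₀ := by simp [hgdef]
      rw [hgx]
      exact hl₀
    · have hxin : x ∈ Metric.ball lam₀ r \ {lam₀} := ⟨hcball_sub hx, hxc⟩
      have hlim : Tendsto (fun n => ⟪Φtn n, F x (Φn n)⟫_ℂ) atTop (𝓝 ⟪Φt, F x Φ⟫_ℂ) :=
        hΦtn.inner (((F x).continuous.tendsto Φ).comp hΦn)
      rw [hgne x hxc]
      have : (fun n => Gn n x) = fun n => ⟪Φtn n, F x (Φn n)⟫_ℂ := by
        funext n; exact hGeq n x hxin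
      rw [this]
      exact hlim
  have hTU : TendstoUniformlyOn Gn g atTop (Metric.closedBall lam₀ ρ') :=
    hUC.tendstoUniformlyOn_of_tendsto hptws
  have hTLU : TendstoLocallyUniformlyOn Gn g atTop (Metric.ball lam₀ ρ') :=
    (hTU.mono Metric.ball_subset_closedBall).tendstoLocallyUniformlyOn
  have hgdiff : DifferentiableOn ℂ g (Metric.ball lam₀ ρ') := by
    apply hTLU.differentiableOn ?_ Metric.isOpen_ball
    apply Eventually.of_forall
    intro n
    intro z hz
    exact ((hGan n z (hball_sub hz)).differentiableAt).differentiableWithinAt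
  -- assemble
  refine ⟨g, ?_, ?_⟩
  · intro z hz
    by_cases hzc : z = lam₀
    · subst hzc
      exact hgdiff.analyticAt (Metric.ball_mem_nhds _ hρ')
    · have hOopen : IsOpen (Metric.ball lam₀ r \ {lam₀}) :=
        Metric.isOpen_ball.sdiff isClosed_singleton
      have hwkdiff : DifferentiableOn ℂ wk (Metric.ball lam₀ r \ {lam₀}) :=
        weak_res_diffOn Φt Φ hOopen hpunct
      have hwk_an : AnalyticAt ℂ wk z := hwkdiff.analyticAt (hOopen.mem_nhds ⟨hz, hzc⟩)
      apply hwk_an.congr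
      filter_upwards [isOpen_compl_singleton.mem_nhds hzc] with x hx
      exact (hgne x hx).symm
  · intro lam hlam R hR
    have hρmem : lam ∈ resolventSetB dom T Γ₁ Γ₂ B := hpunct hlam
    have hRu : R = F lam := resolvent_unique hR (resC_spec hρmem)
    rw [hgne lam hlam.2, hwkdef, hRu]

end Aux

theorem stmt7 (dom : Submodule ℂ H) (T : dom →ₗ[ℂ] H)
    (Γ₁ : dom →ₗ[ℂ] 𝓗) (Γ₂ : dom →ₗ[ℂ] 𝓚) (B : 𝓚 →L[ℂ] 𝓗)
    (domt : Submodule ℂ H) (Tt : domt →ₗ[ℂ] H)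
    (Γt₁ : domt →ₗ[ℂ] 𝓚) (Γt₂ : domt →ₗ[ℂ] 𝓗)
    -- Green identity (paper inner products are linear in the first argument;
    -- Mathlib's `⟪·,·⟫_ℂ` is linear in the second, whence the reversed order)
    (hGreen : ∀ (u : dom) (v : domt),
      ⟪(v : H), T u⟫_ℂ - ⟪Tt v, (u : H)⟫_ℂ = ⟪Γt₂ v, Γ₁ u⟫_ℂ - ⟪Γt₁ v, Γ₂ u⟫_ℂ)
    (μ₀ : ℂ) (hμ₀ : μ₀ ∈ resolventSetB dom T Γ₁ Γ₂ B)
    (μt₀ : ℂ)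
    (hμt₀ : μt₀ ∈ resolventSetB domt Tt Γt₁ Γt₂ (ContinuousLinearMap.adjoint B))
    (lam₀ : ℂ)
    (hM : MAnalyticAt dom T Γ₁ Γ₂ B lam₀)
    -- `λ₀` is at worst an isolated singularity of the resolvent
    (r : ℝ) (hr : 0 < r)
    (hpunct : Metric.ball lam₀ r \ {lam₀} ⊆ resolventSetB dom T Γ₁ Γ₂ B)
    -- `ρ(Ã_{B*})` has finitely many connected components
    (hcomp : {c : Set ℂ | ∃ x ∈ resolventSetB domt Tt Γt₁ Γt₂
        (ContinuousLinearMap.adjoint B),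
      c = connectedComponentIn
        (resolventSetB domt Tt Γt₁ Γt₂ (ContinuousLinearMap.adjoint B)) x}.Finite)
    -- `Ã_{B*}` is the Hilbert-space adjoint of `A_B`
    (hadj : ∀ v w : H,
      (∃ hv : v ∈ domt, Γt₁ ⟨v, hv⟩ = ContinuousLinearMap.adjoint B (Γt₂ ⟨v, hv⟩) ∧
          Tt ⟨v, hv⟩ = w) ↔
        ∀ u : dom, Γ₁ u = B (Γ₂ u) → ⟪v, T u⟫_ℂ = ⟪w, (u : H)⟫_ℂ) :
    ∀ Φ ∈ closure (spaceS dom T Γ₁ Γ₂ B μ₀ : Set H),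
      ∀ Φt ∈ closure
          (spaceS domt Tt Γt₁ Γt₂ (ContinuousLinearMap.adjoint B) μt₀ : Set H),
        ∃ g : ℂ → ℂ, (∀ z ∈ Metric.ball lam₀ r, AnalyticAt ℂ g z) ∧
          ∀ lam ∈ Metric.ball lam₀ r \ {lam₀},
            ∀ R : H →L[ℂ] H, IsResolventAt dom T Γ₁ Γ₂ B lam R →
              g lam = ⟪Φt, R Φ⟫_ℂ := by
  intro Φ hΦc Φt hΦtc
  by_cases hcase : lam₀ ∈ resolventSetB dom T Γ₁ Γ₂ B
  · -- if `lam₀` is itself in the resolvent set, the weak resolvent is analytic on the ball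
    have hball_sub : Metric.ball lam₀ r ⊆ resolventSetB dom T Γ₁ Γ₂ B := by
      intro z hz
      by_cases hzc : z = lam₀
      · rwa [hzc]
      · exact hpunct ⟨hz, hzc⟩
    refine ⟨fun lam => ⟪Φt, resC dom T Γ₁ Γ₂ B lam Φ⟫_ℂ, ?_, ?_⟩
    · intro z hz
      exact (weak_res_diffOn Φt Φ Metric.isOpen_ball hball_sub).analyticAt
        (Metric.isOpen_ball.mem_nhds hz)
    · intro lam hlam R hR
      rw [resolvent_unique hR (resC_spec (hball_sub hlam.1))]
  · obtain ⟨Φn, hΦnmem, hΦnlim⟩ := mem_closure_iff_seq_limit.mp hΦc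
    obtain ⟨Φtn, hΦtnmem, hΦtnlim⟩ := mem_closure_iff_seq_limit.mp hΦtc
    obtain ⟨R₀, hR₀⟩ := hμ₀
    obtain ⟨Rt0, hRt0⟩ := hμt₀
    have hGn : ∀ n : ℕ, ∃ G : ℂ → ℂ, (∀ z ∈ Metric.ball lam₀ r, AnalyticAt ℂ G z) ∧
        ∀ lam ∈ Metric.ball lam₀ r \ {lam₀},
          G lam = ⟪Φtn n, resC dom T Γ₁ Γ₂ B lam (Φn n)⟫_ℂ := by
      intro n
      obtain ⟨g₀, ε, hε, han, heqn⟩ :=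
        core_span hGreen hadj hR₀ hM hcase hRt0 (hΦnmem n) (hΦtnmem n)
      exact glue_pair hr hpunct hε han heqn
    choose G hGan hGeq using hGn
    obtain ⟨g, hgan, hgeq⟩ := closure_step hr hpunct Φn Φtn hΦnlim hΦtnlim G hGan hGeq
    exact ⟨g, hgan, fun lam hlam R hR => hgeq lam hlam R hR⟩
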